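/- Let 0 < α ≤ 1 and β > 0, and let φ : ℝⁿ×ℝⁿ → ℝ and L : ℝⁿ×ℝⁿ×[a,b] → ℝ be of class C². Let (u,y), (ν,w) ∈ L^∞([a,b],ℝⁿ)×ℝⁿ, set x(t) := y + ∫_a^t ((t−s)^{α−1}/Γ(α)) u(s) ds, η(t) := w + ∫_a^t ((t−s)^{α−1}/Γ(α)) ν(s) ds, and for h ∈ ℝ let 𝓛(h) := φ(x(a)+hη(a), x(b)+hη(b)) + ∫_a^b ((b−s)^{β−1}/Γ(β)) L( x(s)+hη(s), u(s)+hν(s), s ) ds. Let D := ∂₁φ(x(a),x(b))·η(a) + ∂₂φ(x(a),x(b))·η(b) + ∫_a^b ((b−s)^{β−1}/Γ(β)) [ ∂₁L(x(s),u(s),s)·η(s) + ∂₂L(x(s),u(s),s)·ν(s) ] ds. Then the limit lim_{h→0} ( 𝓛(h) − 𝓛(0) − h D )/(h²/2) exists and equals η(a)ᵀ A η(a) + 2 η(a)ᵀ B η(b) + η(b)ᵀ C η(b) + ∫_a^b ((b−s)^{β−1}/Γ(β)) [ η(s)ᵀ P(s) η(s) + 2 η(s)ᵀ Q(s) ν(s)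 + ν(s)ᵀ R(s) ν(s) ] ds, where A := ∂²₁₁φ(x(a),x(b)), B := ∂²₁₂φ(x(a),x(b)), C := ∂²₂₂φ(x(a),x(b)), P(s) := ∂²₁₁L(x(s),u(s),s), Q(s) := ∂²₁₂L(x(s),u(s),s), R(s) := ∂²₂₂L(x(s),u(s),s). -/

import Mathlib

open MeasureTheory Set Filter Topology
open scoped RealInnerProductSpace
open InnerProductSpace
open scoped Interval

section Aux

variable {E : Type*} [NormedAddCommGroup E] [InnerProductSpace ℝ E] [CompleteSpace E]
variable {V : Type*} [NormedAddCommGroup V] [NormedSpace ℝ V]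

lemma aux_inner_grad (f : E → ℝ) (p v : E) : ⟪gradient f p, v⟫ = fderiv ℝ f p v := by
  unfold gradient
  exact InnerProductSpace.toDual_symm_apply

lemma aux_grad_eq (F : V → ℝ) (hF : Differentiable ℝ F) (ι : E →L[ℝ] V) (c : V) (p : E) :
    gradient (fun z => F (ι z + c)) p = (toDual ℝ E).symm ((fderiv ℝ F (ι p + c)).comp ι) := by
  unfold gradient
  congr 1
  exact HasFDerivAt.fderiv (by exact ((hF (ι p + c)).hasFDerivAt).comp p ((ι.hasFDerivAt).add_const c))

lemma aux1 (F : V → ℝ) (hF : Differentiable ℝ F) (ι : E →L[ℝ] V) (c : V) (p v : E) :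
    ⟪gradient (fun z => F (ι z + c)) p, v⟫ = fderiv ℝ F (ι p + c) (ι v) := by
  rw [aux_inner_grad,
    show fderiv ℝ (fun z => F (ι z + c)) p = (fderiv ℝ F (ι p + c)).comp ι from
      HasFDerivAt.fderiv (by exact ((hF (ι p + c)).hasFDerivAt).comp p ((ι.hasFDerivAt).add_const c))]
  rfl

lemma aux2 (F : V → ℝ) (hF : ContDiff ℝ 2 F) (ι ρ : E →L[ℝ] V) (c : V) (q v w : E) :
    ⟪w, fderiv ℝ (fun z => (toDual ℝ E).symm ((fderiv ℝ F (ρ z + c)).comp ι)) q v⟫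
      = fderiv ℝ (fderiv ℝ F) (ρ q + c) (ρ v) (ι w) := by
  have hF' : ContDiff ℝ 1 (fderiv ℝ F) := hF.fderiv_right (by norm_num)
  have h1 : HasFDerivAt (fun z : E => ρ z + c) ρ q := ρ.hasFDerivAt.add_const c
  have h2 : HasFDerivAt (fderiv ℝ F) (fderiv ℝ (fderiv ℝ F) (ρ q + c)) (ρ q + c) :=
    (hF'.differentiable (by norm_num) _).hasFDerivAt
  have h3 : HasFDerivAt (fun z : E => fderiv ℝ F (ρ z + c))
      ((fderiv ℝ (fderiv ℝ F) (ρ q + c)).comp ρ) q := h2.comp q h1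
  have h4 := (((ContinuousLinearMap.compL ℝ E V ℝ).flip ι).hasFDerivAt).comp q h3
  have h5 := (((toDual ℝ E).symm.toContinuousLinearEquiv.toContinuousLinearMap).hasFDerivAt).comp q h4
  have h7 : fderiv ℝ (fun z => (toDual ℝ E).symm ((fderiv ℝ F (ρ z + c)).comp ι)) q
      = ((toDual ℝ E).symm.toContinuousLinearEquiv.toContinuousLinearMap).comp
          ((((ContinuousLinearMap.compL ℝ E V ℝ).flip ι)).comp
            ((fderiv ℝ (fderiv ℝ F) (ρ q + c)).comp ρ)) := by
    exact HasFDerivAt.fderiv (by exact h5)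
  rw [real_inner_comm, h7]
  exact InnerProductSpace.toDual_symm_apply

lemma aux_path1 (F : V → ℝ) (hF : Differentiable ℝ F) (c d : V) (t : ℝ) :
    HasDerivAt (fun h : ℝ => F (c + h • d)) (fderiv ℝ F (c + t • d) d) t := by
  have hp : HasDerivAt (fun h : ℝ => c + h • d) d t := by
    simpa using ((hasDerivAt_id t).smul_const d).const_add c
  exact ((hF _).hasFDerivAt).comp_hasDerivAt t hp

lemma aux_path2 (F : V → ℝ) (hF : ContDiff ℝ 2 F) (c d : V) (t : ℝ) :
    HasDerivAt (fun h : ℝ => fderiv ℝ F (c + h • d) d)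
      (fderiv ℝ (fderiv ℝ F) (c + t • d) d d) t := by
  have hp : HasDerivAt (fun h : ℝ => c + h • d) d t := by
    simpa using ((hasDerivAt_id t).smul_const d).const_add c
  have hF' : ContDiff ℝ 1 (fderiv ℝ F) := hF.fderiv_right (by norm_num)
  have h1 : HasDerivAt (fun h : ℝ => fderiv ℝ F (c + h • d))
      (fderiv ℝ (fderiv ℝ F) (c + t • d) d) t :=
    (((hF'.differentiable (by norm_num) _).hasFDerivAt).comp_hasDerivAt t hp)
  simpa using h1.clm_apply (hasDerivAt_const t d)

lemma frac_bound {E' : Type*} [NormedAddCommGroup E'] [NormedSpace ℝ E']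
    {a b α : ℝ} (hα0 : 0 < α) {g : ℝ → E'} {C : ℝ} (hC : 0 ≤ C)
    (hg : ∀ᵐ s ∂(volume : Measure ℝ), s ∈ Icc a b → ‖g s‖ ≤ C) {t : ℝ} (ht : t ∈ Icc a b) :
    ‖∫ s in a..t, ((t - s) ^ (α - 1) / Real.Gamma α) • g s‖
      ≤ C * (b - a) ^ α / (Real.Gamma α * α) := by
  have hΓ : 0 < Real.Gamma α := Real.Gamma_pos_of_pos hα0
  have hat : a ≤ t := ht.1
  have hint : IntervalIntegrable (fun s => (t - s) ^ (α - 1) / Real.Gamma α * C) volume a t := by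
    have h0 : IntervalIntegrable (fun x : ℝ => x ^ (α - 1)) volume (t - a) 0 :=
      intervalIntegral.intervalIntegrable_rpow' (by linarith)
    have h1 := h0.comp_sub_left t
    simp only [sub_sub_cancel, sub_zero] at h1
    exact (h1.div_const _).mul_const _
  have hle : ∀ᵐ s ∂volume.restrict (Ι a t),
      ‖((t - s) ^ (α - 1) / Real.Gamma α) • g s‖ ≤ (t - s) ^ (α - 1) / Real.Gamma α * C := by
    filter_upwards [ae_restrict_of_ae hg, ae_restrict_mem measurableSet_uIoc] with s hs1 hs2
    rw [uIoc_of_le hat] at hs2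
    have hsb : s ∈ Icc a b := ⟨le_of_lt hs2.1, hs2.2.trans ht.2⟩
    have h3 : (0:ℝ) ≤ (t - s) ^ (α - 1) := Real.rpow_nonneg (by linarith [hs2.2]) _
    rw [norm_smul, Real.norm_eq_abs, abs_of_nonneg (div_nonneg h3 hΓ.le)]
    exact mul_le_mul_of_nonneg_left (hs1 hsb) (div_nonneg h3 hΓ.le)
  refine (intervalIntegral.norm_integral_le_abs_of_norm_le hle hint).trans ?_
  have hval : ∫ s in a..t, (t - s) ^ (α - 1) = (t - a) ^ α / α := by
    rw [intervalIntegral.integral_comp_sub_left (fun s => s ^ (α - 1)) t]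
    simp only [sub_self, sub_sub_cancel]
    rw [integral_rpow (Or.inl (by linarith)), sub_add_cancel, Real.zero_rpow (ne_of_gt hα0)]
    ring
  have hcalc : ∫ s in a..t, (t - s) ^ (α - 1) / Real.Gamma α * C
      = (t - a) ^ α / α / Real.Gamma α * C := by
    rw [intervalIntegral.integral_mul_const, intervalIntegral.integral_div, hval]
  have h4 : (0:ℝ) ≤ (t - a) ^ α := Real.rpow_nonneg (by linarith) _
  rw [hcalc, abs_of_nonneg (mul_nonneg (div_nonneg (div_nonneg h4 hα0.le) hΓ.le) hC)]
  have hmono : (t - a) ^ α ≤ (b - a) ^ α :=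
    Real.rpow_le_rpow (by linarith) (by linarith [ht.2]) hα0.le
  calc (t - a) ^ α / α / Real.Gamma α * C = C * (t - a) ^ α / (Real.Gamma α * α) := by ring
    _ ≤ C * (b - a) ^ α / (Real.Gamma α * α) := by gcongr

lemma frac_meas {E' : Type*} [NormedAddCommGroup E'] [NormedSpace ℝ E'] [MeasurableSpace E']
    [BorelSpace E'] [SecondCountableTopology E'] (a α γ : ℝ) {g : ℝ → E'} (hg : Measurable g) :
    ∃ A : ℝ → E', Measurable A ∧
      ∀ t, a ≤ t → A t = ∫ s in a..t, ((t - s) ^ (α - 1) / γ) • g s := by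
  have hrpc : Measurable (fun x : ℝ => x ^ (α - 1)) :=
    measurable_of_continuousOn_compl_singleton 0
      (fun x hx => (Real.continuousAt_rpow_const x _ (Or.inl hx)).continuousWithinAt)
  set F : ℝ × ℝ → E' := fun q =>
    Set.indicator {q : ℝ × ℝ | q.2 ∈ Ioc a q.1}
      (fun q => ((q.1 - q.2) ^ (α - 1) / γ) • g q.2) q with hFdef
  have hFm : Measurable F := by
    apply Measurable.indicator
    · exact ((hrpc.comp (measurable_fst.sub measurable_snd)).div_const γ).smul
        (hg.comp measurable_snd)
    · have : {q : ℝ × ℝ | q.2 ∈ Ioc a q.1}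
          = {q : ℝ × ℝ | a < q.2} ∩ {q : ℝ × ℝ | q.2 ≤ q.1} := by
        ext q; simp [Set.mem_Ioc, and_comm]
      rw [this]
      exact (measurableSet_lt measurable_const measurable_snd).inter
        (measurableSet_le measurable_snd measurable_fst)
  refine ⟨fun t => ∫ s, F (t, s), (hFm.stronglyMeasurable.integral_prod_right').measurable, ?_⟩
  intro t hat
  rw [intervalIntegral.integral_of_le hat, ← MeasureTheory.integral_indicator measurableSet_Ioc]
  congr 1

end Aux

open Metric in
set_option maxHeartbeats 2000000 in
theorem stmt_5 (n : ℕ) (hn : 1 ≤ n) (a b : ℝ) (hab : a < b)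
    (α β : ℝ) (hα0 : 0 < α) (hα1 : α ≤ 1) (hβ : 0 < β)
    (φ : EuclideanSpace ℝ (Fin n) × EuclideanSpace ℝ (Fin n) → ℝ)
    (L : EuclideanSpace ℝ (Fin n) × EuclideanSpace ℝ (Fin n) × ℝ → ℝ)
    (hφ : ContDiff ℝ 2 φ) (hL : ContDiff ℝ 2 L)
    (u ν : ℝ → EuclideanSpace ℝ (Fin n)) (hum : Measurable u) (hνm : Measurable ν)
    (Cu Cν : ℝ)
    (hub : ∀ᵐ s ∂(volume : Measure ℝ), s ∈ Icc a b → ‖u s‖ ≤ Cu)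
    (hνb : ∀ᵐ s ∂(volume : Measure ℝ), s ∈ Icc a b → ‖ν s‖ ≤ Cν)
    (y w : EuclideanSpace ℝ (Fin n)) (x η : ℝ → EuclideanSpace ℝ (Fin n))
    (hx : ∀ t, x t = y + ∫ s in a..t, ((t - s) ^ (α - 1) / Real.Gamma α) • u s)
    (hη : ∀ t, η t = w + ∫ s in a..t, ((t - s) ^ (α - 1) / Real.Gamma α) • ν s)
    (𝓛 : ℝ → ℝ)
    (h𝓛 : ∀ h : ℝ, 𝓛 h = φ (x a + h • η a, x b + h • η b) +
        ∫ s in a..b, ((b - s) ^ (β - 1) / Real.Gamma β) * L (x s + h • η s, u s + h • ν s, s))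
    (D : ℝ)
    (hD : D = ⟪gradient (fun z => φ (z, x b)) (x a), η a⟫
        + ⟪gradient (fun z => φ (x a, z)) (x b), η b⟫
        + ∫ s in a..b, ((b - s) ^ (β - 1) / Real.Gamma β) *
            (⟪gradient (fun z => L (z, u s, s)) (x s), η s⟫
              + ⟪gradient (fun z => L (x s, z, s)) (u s), ν s⟫)) :
    Tendsto (fun h : ℝ => (𝓛 h - 𝓛 0 - h * D) / (h ^ 2 / 2)) (𝓝[≠] (0 : ℝ))
      (𝓝 (⟪η a, (fderiv ℝ (fun z => gradient (fun z' => φ (z', x b)) z) (x a)) (η a)⟫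
        + 2 * ⟪η a, (fderiv ℝ (fun z₂ => gradient (fun z₁ => φ (z₁, z₂)) (x a)) (x b)) (η b)⟫
        + ⟪η b, (fderiv ℝ (fun z => gradient (fun z' => φ (x a, z')) z) (x b)) (η b)⟫
        + ∫ s in a..b, ((b - s) ^ (β - 1) / Real.Gamma β) *
            (⟪η s, (fderiv ℝ (fun z => gradient (fun z' => L (z', u s, s)) z) (x s)) (η s)⟫
              + 2 * ⟪η s, (fderiv ℝ (fun z₂ => gradient (fun z₁ => L (z₁, z₂, s)) (x s)) (u s)) (ν s)⟫
              + ⟪ν s, (fderiv ℝ (fun z => gradient (fun z' => L (x s, z', s)) z) (u s)) (ν s)⟫))) := by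
  classical
  haveI hsc0 : SecondCountableTopology (EuclideanSpace ℝ (Fin n) × EuclideanSpace ℝ (Fin n) × ℝ) :=
    by infer_instance
  haveI hsc1 : SecondCountableTopologyEither
      (EuclideanSpace ℝ (Fin n) × EuclideanSpace ℝ (Fin n) × ℝ)
      (EuclideanSpace ℝ (Fin n) × EuclideanSpace ℝ (Fin n) × ℝ) :=
    secondCountableTopologyEither_of_left _ _
  haveI hsc2 : OpensMeasurableSpace ((EuclideanSpace ℝ (Fin n) × EuclideanSpace ℝ (Fin n) × ℝ)
      × (EuclideanSpace ℝ (Fin n) × EuclideanSpace ℝ (Fin n) × ℝ)) := Prod.opensMeasurableSpace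
  have hΓα : 0 < Real.Gamma α := Real.Gamma_pos_of_pos hα0
  have hΓβ : 0 < Real.Gamma β := Real.Gamma_pos_of_pos hβ
  have hφd : Differentiable ℝ φ := hφ.differentiable (by norm_num)
  have hLd : Differentiable ℝ L := hL.differentiable (by norm_num)
  have hL1 : ContDiff ℝ 1 (fderiv ℝ L) := hL.fderiv_right (by norm_num)
  have hL2cont : Continuous (fderiv ℝ (fderiv ℝ L)) := (hL1.fderiv_right (m := 0) le_rfl).continuous
  -- path equalities
  have hpath : ∀ (t s : ℝ),
      ((x s, u s, s) : EuclideanSpace ℝ (Fin n) × EuclideanSpace ℝ (Fin n) × ℝ)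
        + t • (η s, ν s, (0:ℝ)) = (x s + t • η s, u s + t • ν s, s) := by
    intro t s
    simp [Prod.smul_mk, Prod.mk_add_mk]
  have hpathP : ∀ t : ℝ,
      ((x a, x b) : EuclideanSpace ℝ (Fin n) × EuclideanSpace ℝ (Fin n)) + t • (η a, η b)
        = (x a + t • η a, x b + t • η b) := by
    intro t; simp [Prod.smul_mk, Prod.mk_add_mk]
  -- nonneg bounds on controls
  set Cu' := max Cu 0 with hCu'
  set Cν' := max Cν 0 with hCν'
  have hub' : ∀ᵐ s ∂(volume : Measure ℝ), s ∈ Icc a b → ‖u s‖ ≤ Cu' :=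
    hub.mono fun s h hs => (h hs).trans (le_max_left _ _)
  have hνb' : ∀ᵐ s ∂(volume : Measure ℝ), s ∈ Icc a b → ‖ν s‖ ≤ Cν' :=
    hνb.mono fun s h hs => (h hs).trans (le_max_left _ _)
  have hCu0 : 0 ≤ Cu' := le_max_right _ _
  have hCν0 : 0 ≤ Cν' := le_max_right _ _
  set Mx := ‖y‖ + Cu' * (b - a) ^ α / (Real.Gamma α * α) with hMxdef
  set Mη := ‖w‖ + Cν' * (b - a) ^ α / (Real.Gamma α * α) with hMηdef
  have hba : (0:ℝ) ≤ (b - a) ^ α := Real.rpow_nonneg (by linarith) _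
  have hMx0 : 0 ≤ Mx :=
    add_nonneg (norm_nonneg _) (div_nonneg (mul_nonneg hCu0 hba) (mul_nonneg hΓα.le hα0.le))
  have hMη0 : 0 ≤ Mη :=
    add_nonneg (norm_nonneg _) (div_nonneg (mul_nonneg hCν0 hba) (mul_nonneg hΓα.le hα0.le))
  have hxb : ∀ t ∈ Icc a b, ‖x t‖ ≤ Mx := by
    intro t ht
    rw [hx t]
    exact (norm_add_le _ _).trans (add_le_add le_rfl (frac_bound hα0 hCu0 hub' ht))
  have hηb2 : ∀ t ∈ Icc a b, ‖η t‖ ≤ Mη := by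
    intro t ht
    rw [hη t]
    exact (norm_add_le _ _).trans (add_le_add le_rfl (frac_bound hα0 hCν0 hνb' ht))
  set Md := Mη + Cν' + 1 with hMddef
  have hMd0 : 0 ≤ Md := by linarith
  have hnorm3 : ∀ (p₁ p₂ : EuclideanSpace ℝ (Fin n)) (r : ℝ),
      ‖((p₁, p₂, r) : EuclideanSpace ℝ (Fin n) × EuclideanSpace ℝ (Fin n) × ℝ)‖
        = max ‖p₁‖ (max ‖p₂‖ |r|) := by
    intro p₁ p₂ r
    rw [Prod.norm_def, Prod.norm_def, Real.norm_eq_abs]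
  set R := Mx + 2 * Mη + Cu' + 2 * Cν' + |a| + |b| with hRdef
  have hsabs : ∀ s ∈ Icc a b, |s| ≤ |a| + |b| := by
    intro s hs
    rcases hs with ⟨h1, h2⟩
    rw [abs_le]
    constructor
    · linarith [neg_abs_le a, abs_nonneg b]
    · linarith [le_abs_self b, abs_nonneg a]
  have hddb : ∀ᵐ s ∂(volume : Measure ℝ), s ∈ Icc a b →
      ‖((η s, ν s, (0:ℝ)) : EuclideanSpace ℝ (Fin n) × EuclideanSpace ℝ (Fin n) × ℝ)‖ ≤ Md := by
    filter_upwards [hνb'] with s hν1 hs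
    rw [hnorm3]
    have h1 := hηb2 s hs
    have h2 := hν1 hs
    simp only [abs_zero]
    exact max_le (by linarith) (max_le (by linarith) (by linarith))
  have hptR : ∀ᵐ s ∂(volume : Measure ℝ), s ∈ Icc a b → ∀ t : ℝ, |t| ≤ 2 →
      ‖((x s, u s, s) : EuclideanSpace ℝ (Fin n) × EuclideanSpace ℝ (Fin n) × ℝ)
        + t • (η s, ν s, (0:ℝ))‖ ≤ R := by
    filter_upwards [hub', hνb'] with s hu1 hν1
    intro hs t ht
    rw [hpath t s, hnorm3]
    have h1 : ‖x s + t • η s‖ ≤ Mx + 2 * Mη := by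
      refine (norm_add_le _ _).trans ?_
      rw [norm_smul, Real.norm_eq_abs]
      have hx1 := hxb s hs
      have hη1 := hηb2 s hs
      nlinarith [norm_nonneg (η s)]
    have h2 : ‖u s + t • ν s‖ ≤ Cu' + 2 * Cν' := by
      refine (norm_add_le _ _).trans ?_
      rw [norm_smul, Real.norm_eq_abs]
      have hu2 := hu1 hs
      have hν2 := hν1 hs
      nlinarith [norm_nonneg (ν s)]
    have h3 := hsabs s hs
    have hab2 : 0 ≤ |a| + |b| := by positivity
    exact max_le (by linarith) (max_le (by linarith) (by linarith))
  -- compact bounds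
  obtain ⟨C0, hC0⟩ := (isCompact_closedBall
    (0 : EuclideanSpace ℝ (Fin n) × EuclideanSpace ℝ (Fin n) × ℝ) R).exists_bound_of_continuousOn
    hL.continuous.continuousOn
  obtain ⟨C1, hC1⟩ := (isCompact_closedBall
    (0 : EuclideanSpace ℝ (Fin n) × EuclideanSpace ℝ (Fin n) × ℝ) R).exists_bound_of_continuousOn
    hL1.continuous.continuousOn
  obtain ⟨C2, hC2⟩ := (isCompact_closedBall
    (0 : EuclideanSpace ℝ (Fin n) × EuclideanSpace ℝ (Fin n) × ℝ) R).exists_bound_of_continuousOn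
    (f := fderiv ℝ (fderiv ℝ L)) hL2cont.continuousOn
  -- measurability of x and η
  obtain ⟨X, hXm, hXeq⟩ := frac_meas a α (Real.Gamma α) hum
  obtain ⟨Y, hYm, hYeq⟩ := frac_meas a α (Real.Gamma α) hνm
  have hxm : AEMeasurable x (volume.restrict (Ioc a b)) := by
    refine AEMeasurable.congr (f := fun t => y + X t) ((hXm.const_add y).aemeasurable) ?_
    filter_upwards [ae_restrict_mem measurableSet_Ioc] with t ht
    rw [hx t, hXeq t ht.1.le]
  have hηmae : AEMeasurable η (volume.restrict (Ioc a b)) := by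
    refine AEMeasurable.congr (f := fun t => w + Y t) ((hYm.const_add w).aemeasurable) ?_
    filter_upwards [ae_restrict_mem measurableSet_Ioc] with t ht
    rw [hη t, hYeq t ht.1.le]
  have hptm : ∀ t : ℝ, AEMeasurable
      (fun s => ((x s, u s, s) : EuclideanSpace ℝ (Fin n) × EuclideanSpace ℝ (Fin n) × ℝ)
        + t • (η s, ν s, (0:ℝ))) (volume.restrict (Ioc a b)) := by
    intro t
    have h1 : AEMeasurable (fun s => x s + t • η s) (volume.restrict (Ioc a b)) :=
      hxm.add (hηmae.const_smul t)
    have h2 : AEMeasurable (fun s => u s + t • ν s) (volume.restrict (Ioc a b)) :=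
      hum.aemeasurable.add ((hνm.aemeasurable).const_smul t)
    exact (h1.prodMk (h2.prodMk aemeasurable_id)).congr
      (Eventually.of_forall fun s => (hpath t s).symm)
  have hddm : AEMeasurable
      (fun s => ((η s, ν s, (0:ℝ)) : EuclideanSpace ℝ (Fin n) × EuclideanSpace ℝ (Fin n) × ℝ))
      (volume.restrict (Ioc a b)) :=
    hηmae.prodMk (hνm.aemeasurable.prodMk aemeasurable_const)
  have hIoc : Ι a b = Ioc a b := uIoc_of_le hab.le
  -- weight
  have hWm : Measurable (fun s : ℝ => (b - s) ^ (β - 1) / Real.Gamma β) :=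
    ((measurable_of_continuousOn_compl_singleton (0:ℝ)
      (fun z hz => (Real.continuousAt_rpow_const z _ (Or.inl hz)).continuousWithinAt)).comp
      (measurable_const.sub measurable_id)).div_const _
  have hWi : IntervalIntegrable (fun s : ℝ => (b - s) ^ (β - 1) / Real.Gamma β) volume a b := by
    have h0 : IntervalIntegrable (fun z : ℝ => z ^ (β - 1)) volume (b - a) 0 :=
      intervalIntegral.intervalIntegrable_rpow' (by linarith)
    have h1 := h0.comp_sub_left b
    simp only [sub_sub_cancel, sub_zero] at h1
    exact h1.div_const _
  have hWabs : IntervalIntegrable (fun s : ℝ => |(b - s) ^ (β - 1) / Real.Gamma β|) volume a b :=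
    hWi.abs
  -- measurability of integrands
  have hFmeas : ∀ t : ℝ, AEStronglyMeasurable
      (fun s => (b - s) ^ (β - 1) / Real.Gamma β
        * L ((x s, u s, s) + t • (η s, ν s, (0:ℝ)))) (volume.restrict (Ι a b)) := by
    intro t; rw [hIoc]
    exact (hWm.aemeasurable.mul (hL.continuous.measurable.comp_aemeasurable (hptm t))).aestronglyMeasurable
  have happ1 : Continuous (fun pq :
      (EuclideanSpace ℝ (Fin n) × EuclideanSpace ℝ (Fin n) × ℝ)
        × (EuclideanSpace ℝ (Fin n) × EuclideanSpace ℝ (Fin n) × ℝ) => fderiv ℝ L pq.1 pq.2) :=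
    isBoundedBilinearMap_apply.continuous.comp
      ((hL1.continuous.comp continuous_fst).prodMk continuous_snd)
  have hF1meas : ∀ t : ℝ, AEStronglyMeasurable
      (fun s => (b - s) ^ (β - 1) / Real.Gamma β
        * fderiv ℝ L ((x s, u s, s) + t • (η s, ν s, (0:ℝ))) (η s, ν s, (0:ℝ)))
      (volume.restrict (Ι a b)) := by
    intro t; rw [hIoc]
    exact (hWm.aemeasurable.mul
      (happ1.measurable.comp_aemeasurable ((hptm t).prodMk hddm))).aestronglyMeasurable
  have happ2 : Continuous (fun pq :
      (EuclideanSpace ℝ (Fin n) × EuclideanSpace ℝ (Fin n) × ℝ)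
        × (EuclideanSpace ℝ (Fin n) × EuclideanSpace ℝ (Fin n) × ℝ) =>
      fderiv ℝ (fderiv ℝ L) pq.1 pq.2 pq.2) :=
    isBoundedBilinearMap_apply.continuous.comp
      ((isBoundedBilinearMap_apply.continuous.comp
        ((hL2cont.comp continuous_fst).prodMk continuous_snd)).prodMk continuous_snd)
  have hF2meas : AEStronglyMeasurable
      (fun s => (b - s) ^ (β - 1) / Real.Gamma β
        * fderiv ℝ (fderiv ℝ L) ((x s, u s, s) + (0:ℝ) • (η s, ν s, (0:ℝ)))
            (η s, ν s, (0:ℝ)) (η s, ν s, (0:ℝ))) (volume.restrict (Ι a b)) := by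
    rw [hIoc]
    exact (hWm.aemeasurable.mul
      (happ2.measurable.comp_aemeasurable ((hptm 0).prodMk hddm))).aestronglyMeasurable
  -- integrability of F t
  have hFint : ∀ t : ℝ, |t| ≤ 2 → IntervalIntegrable
      (fun s => (b - s) ^ (β - 1) / Real.Gamma β
        * L ((x s, u s, s) + t • (η s, ν s, (0:ℝ)))) volume a b := by
    intro t ht
    refine (hWabs.mul_const (|C0| + 1)).mono_fun (hFmeas t) ?_
    filter_upwards [ae_restrict_of_ae hptR, ae_restrict_mem measurableSet_uIoc] with s h1 h2
    have hs : s ∈ Icc a b := by rw [hIoc] at h2; exact ⟨h2.1.le, h2.2⟩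
    have h3 := h1 hs t ht
    have h4 : ‖L ((x s, u s, s) + t • (η s, ν s, (0:ℝ)))‖ ≤ C0 :=
      hC0 _ (mem_closedBall_zero_iff.mpr h3)
    rw [Real.norm_eq_abs] at h4
    have h5 : |L ((x s, u s, s) + t • (η s, ν s, (0:ℝ)))| ≤ |C0| + 1 :=
      h4.trans ((le_abs_self C0).trans (by linarith))
    have hnn : (0:ℝ) ≤ |(b - s) ^ (β - 1) / Real.Gamma β| * (|C0| + 1) := by positivity
    calc ‖(b - s) ^ (β - 1) / Real.Gamma β * L ((x s, u s, s) + t • (η s, ν s, (0:ℝ)))‖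
        = |(b - s) ^ (β - 1) / Real.Gamma β|
          * |L ((x s, u s, s) + t • (η s, ν s, (0:ℝ)))| := by
          rw [Real.norm_eq_abs, abs_mul]
      _ ≤ |(b - s) ^ (β - 1) / Real.Gamma β| * (|C0| + 1) :=
          mul_le_mul_of_nonneg_left h5 (abs_nonneg _)
      _ = ‖|(b - s) ^ (β - 1) / Real.Gamma β| * (|C0| + 1)‖ := (Real.norm_of_nonneg hnn).symm
  -- first derivative of the integral term (dominated convergence)
  have hI' : ∀ t₀ ∈ ball (0:ℝ) 1,
      IntervalIntegrable (fun s => (b - s) ^ (β - 1) / Real.Gamma β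
        * fderiv ℝ L ((x s, u s, s) + t₀ • (η s, ν s, (0:ℝ))) (η s, ν s, (0:ℝ))) volume a b
      ∧ HasDerivAt (fun t => ∫ s in a..b, (b - s) ^ (β - 1) / Real.Gamma β
          * L ((x s, u s, s) + t • (η s, ν s, (0:ℝ))))
        (∫ s in a..b, (b - s) ^ (β - 1) / Real.Gamma β
          * fderiv ℝ L ((x s, u s, s) + t₀ • (η s, ν s, (0:ℝ))) (η s, ν s, (0:ℝ))) t₀ := by
    intro t₀ ht₀
    have ht₀' : |t₀| < 1 := by rwa [mem_ball, dist_zero_right, Real.norm_eq_abs] at ht₀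
    refine intervalIntegral.hasDerivAt_integral_of_dominated_loc_of_deriv_le
      (F := fun t s => (b - s) ^ (β - 1) / Real.Gamma β
        * L ((x s, u s, s) + t • (η s, ν s, (0:ℝ))))
      (F' := fun t s => (b - s) ^ (β - 1) / Real.Gamma β
        * fderiv ℝ L ((x s, u s, s) + t • (η s, ν s, (0:ℝ))) (η s, ν s, (0:ℝ)))
      (bound := fun s => |(b - s) ^ (β - 1) / Real.Gamma β| * ((|C1| + 1) * Md))
      (ball_mem_nhds _ zero_lt_one)
      (Eventually.of_forall hFmeas) (hFint t₀ (by linarith)) (hF1meas t₀) ?_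
      (hWabs.mul_const ((|C1| + 1) * Md)) ?_
    · filter_upwards [hptR, hddb] with s h1 h2 hsI t htb
      have hs : s ∈ Icc a b := by rw [hIoc] at hsI; exact ⟨hsI.1.le, hsI.2⟩
      have htt : |t| ≤ 2 := by
        have h5 : |t - t₀| < 1 := by rwa [mem_ball, Real.dist_eq] at htb
        calc |t| = |t - t₀ + t₀| := by ring_nf
          _ ≤ |t - t₀| + |t₀| := abs_add_le _ _
          _ ≤ 2 := by linarith
      have h3 := h1 hs t htt
      have h4 : ‖fderiv ℝ L ((x s, u s, s) + t • (η s, ν s, (0:ℝ)))‖ ≤ C1 :=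
        hC1 _ (mem_closedBall_zero_iff.mpr h3)
      rw [Real.norm_eq_abs, abs_mul]
      refine mul_le_mul_of_nonneg_left ?_ (abs_nonneg _)
      calc |fderiv ℝ L ((x s, u s, s) + t • (η s, ν s, (0:ℝ))) (η s, ν s, (0:ℝ))|
          ≤ ‖fderiv ℝ L ((x s, u s, s) + t • (η s, ν s, (0:ℝ)))‖ * ‖((η s, ν s, (0:ℝ)) :
            EuclideanSpace ℝ (Fin n) × EuclideanSpace ℝ (Fin n) × ℝ)‖ :=
            (fderiv ℝ L _).le_opNorm _
        _ ≤ (|C1| + 1) * Md := by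
            refine mul_le_mul (h4.trans ((le_abs_self C1).trans (by linarith))) (h2 hs)
              (norm_nonneg _) (by positivity)
    · refine Eventually.of_forall fun s _ t _ => ?_
      exact (aux_path1 L hLd (x s, u s, s) (η s, ν s, (0:ℝ)) t).const_mul _
  -- second derivative of the integral term
  have hI'' : HasDerivAt (fun t : ℝ => ∫ s in a..b, (b - s) ^ (β - 1) / Real.Gamma β
        * fderiv ℝ L ((x s, u s, s) + t • (η s, ν s, (0:ℝ))) (η s, ν s, (0:ℝ)))
      (∫ s in a..b, (b - s) ^ (β - 1) / Real.Gamma β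
        * fderiv ℝ (fderiv ℝ L) ((x s, u s, s) + (0:ℝ) • (η s, ν s, (0:ℝ)))
          (η s, ν s, (0:ℝ)) (η s, ν s, (0:ℝ))) (0:ℝ) := by
    refine (intervalIntegral.hasDerivAt_integral_of_dominated_loc_of_deriv_le
      (F := fun t s => (b - s) ^ (β - 1) / Real.Gamma β
        * fderiv ℝ L ((x s, u s, s) + t • (η s, ν s, (0:ℝ))) (η s, ν s, (0:ℝ)))
      (F' := fun t s => (b - s) ^ (β - 1) / Real.Gamma β
        * fderiv ℝ (fderiv ℝ L) ((x s, u s, s) + t • (η s, ν s, (0:ℝ)))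
          (η s, ν s, (0:ℝ)) (η s, ν s, (0:ℝ)))
      (bound := fun s => |(b - s) ^ (β - 1) / Real.Gamma β| * ((|C2| + 1) * Md * Md))
      (ball_mem_nhds _ zero_lt_one)
      (Eventually.of_forall hF1meas) ((hI' 0 (mem_ball_self one_pos)).1) hF2meas ?_
      (hWabs.mul_const ((|C2| + 1) * Md * Md)) ?_).2
    · filter_upwards [hptR, hddb] with s h1 h2 hsI t htb
      have hs : s ∈ Icc a b := by rw [hIoc] at hsI; exact ⟨hsI.1.le, hsI.2⟩
      have htt : |t| ≤ 2 := by
        have h5 : |t - 0| < 1 := by rwa [mem_ball, Real.dist_eq] at htb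
        rw [sub_zero] at h5
        linarith
      have h3 := h1 hs t htt
      have h4 : ‖fderiv ℝ (fderiv ℝ L) ((x s, u s, s) + t • (η s, ν s, (0:ℝ)))‖ ≤ C2 :=
        hC2 _ (mem_closedBall_zero_iff.mpr h3)
      rw [Real.norm_eq_abs, abs_mul]
      refine mul_le_mul_of_nonneg_left ?_ (abs_nonneg _)
      have h6 := h2 hs
      calc |fderiv ℝ (fderiv ℝ L) ((x s, u s, s) + t • (η s, ν s, (0:ℝ)))
            (η s, ν s, (0:ℝ)) (η s, ν s, (0:ℝ))|
          ≤ ‖fderiv ℝ (fderiv ℝ L) ((x s, u s, s) + t • (η s, ν s, (0:ℝ))) (η s, ν s, (0:ℝ))‖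
            * ‖((η s, ν s, (0:ℝ)) :
              EuclideanSpace ℝ (Fin n) × EuclideanSpace ℝ (Fin n) × ℝ)‖ :=
            (fderiv ℝ (fderiv ℝ L) _ _).le_opNorm _
        _ ≤ (‖fderiv ℝ (fderiv ℝ L) ((x s, u s, s) + t • (η s, ν s, (0:ℝ)))‖
            * ‖((η s, ν s, (0:ℝ)) :
              EuclideanSpace ℝ (Fin n) × EuclideanSpace ℝ (Fin n) × ℝ)‖) * Md := by
            refine mul_le_mul_of_nonneg_left h6 ?_ |>.trans ?_
            · exact norm_nonneg _
            · exact mul_le_mul_of_nonneg_right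
                ((fderiv ℝ (fderiv ℝ L) _).le_opNorm _) hMd0
        _ ≤ (|C2| + 1) * Md * Md := by
            refine mul_le_mul_of_nonneg_right ?_ hMd0
            refine mul_le_mul (h4.trans ((le_abs_self C2).trans (by linarith))) h6
              (norm_nonneg _) (by positivity)
    · refine Eventually.of_forall fun s _ t _ => ?_
      exact (aux_path2 L hL (x s, u s, s) (η s, ν s, (0:ℝ)) t).const_mul _

  -- Φ part derivatives
  have hΦ' : ∀ t : ℝ, HasDerivAt (fun h : ℝ => φ ((x a, x b) + h • (η a, η b)))
      (fderiv ℝ φ ((x a, x b) + t • (η a, η b)) (η a, η b)) t :=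
    fun t => aux_path1 φ hφd _ _ t
  have hΦ'' : HasDerivAt (fun t : ℝ => fderiv ℝ φ ((x a, x b) + t • (η a, η b)) (η a, η b))
      (fderiv ℝ (fderiv ℝ φ) ((x a, x b) + (0:ℝ) • (η a, η b)) (η a, η b) (η a, η b)) (0:ℝ) :=
    aux_path2 φ hφ _ _ 0
  have h𝓛eq : 𝓛 = fun t : ℝ => φ ((x a, x b) + t • (η a, η b))
      + ∫ s in a..b, (b - s) ^ (β - 1) / Real.Gamma β
          * L ((x s, u s, s) + t • (η s, ν s, (0:ℝ))) := by
    funext t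
    rw [h𝓛 t, hpathP t]
    congr 1
    refine intervalIntegral.integral_congr fun s _ => ?_
    rw [hpath t s]
  have h𝓛' : ∀ t₀ ∈ ball (0:ℝ) 1, HasDerivAt 𝓛
      (fderiv ℝ φ ((x a, x b) + t₀ • (η a, η b)) (η a, η b)
        + ∫ s in a..b, (b - s) ^ (β - 1) / Real.Gamma β
            * fderiv ℝ L ((x s, u s, s) + t₀ • (η s, ν s, (0:ℝ))) (η s, ν s, (0:ℝ))) t₀ := by
    intro t₀ ht₀
    rw [h𝓛eq]
    exact (hΦ' t₀).add (hI' t₀ ht₀).2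
  set L' : ℝ → ℝ := fun t => fderiv ℝ φ ((x a, x b) + t • (η a, η b)) (η a, η b)
      + ∫ s in a..b, (b - s) ^ (β - 1) / Real.Gamma β
          * fderiv ℝ L ((x s, u s, s) + t • (η s, ν s, (0:ℝ))) (η s, ν s, (0:ℝ)) with hL'def
  have hzero3 : ∀ p q : EuclideanSpace ℝ (Fin n) × EuclideanSpace ℝ (Fin n) × ℝ,
      p + (0:ℝ) • q = p := fun p q => by rw [zero_smul, add_zero]
  have hzero2 : ∀ p q : EuclideanSpace ℝ (Fin n) × EuclideanSpace ℝ (Fin n),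
      p + (0:ℝ) • q = p := fun p q => by rw [zero_smul, add_zero]
  have hLd2 : HasDerivAt L'
      (fderiv ℝ (fderiv ℝ φ) (x a, x b) (η a, η b) (η a, η b)
        + ∫ s in a..b, (b - s) ^ (β - 1) / Real.Gamma β
            * fderiv ℝ (fderiv ℝ L) (x s, u s, s) (η s, ν s, (0:ℝ)) (η s, ν s, (0:ℝ)))
      (0:ℝ) := by
    have heq : fderiv ℝ (fderiv ℝ φ) ((x a, x b) + (0:ℝ) • (η a, η b)) (η a, η b) (η a, η b)
        + (∫ s in a..b, (b - s) ^ (β - 1) / Real.Gamma β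
            * fderiv ℝ (fderiv ℝ L) ((x s, u s, s) + (0:ℝ) • (η s, ν s, (0:ℝ)))
              (η s, ν s, (0:ℝ)) (η s, ν s, (0:ℝ)))
        = fderiv ℝ (fderiv ℝ φ) (x a, x b) (η a, η b) (η a, η b)
        + ∫ s in a..b, (b - s) ^ (β - 1) / Real.Gamma β
            * fderiv ℝ (fderiv ℝ L) (x s, u s, s) (η s, ν s, (0:ℝ)) (η s, ν s, (0:ℝ)) := by
      rw [hzero2]
      congr 1
      exact intervalIntegral.integral_congr fun s _ => by rw [hzero3]
    exact heq ▸ (hΦ''.add hI'')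
  have hL0eq : L' 0 = fderiv ℝ φ (x a, x b) (η a, η b)
      + ∫ s in a..b, (b - s) ^ (β - 1) / Real.Gamma β
          * fderiv ℝ L (x s, u s, s) (η s, ν s, (0:ℝ)) := by
    rw [hL'def]
    simp only
    rw [hzero2]
    congr 1
    exact intervalIntegral.integral_congr fun s _ => by rw [hzero3]
  -- first-order identities
  have e1 : ⟪gradient (fun z => φ (z, x b)) (x a), η a⟫
      = fderiv ℝ φ (x a, x b) (η a, (0 : EuclideanSpace ℝ (Fin n))) := by
    have h := aux1 φ hφd (ContinuousLinearMap.inl ℝ _ _)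
      ((0 : EuclideanSpace ℝ (Fin n)), x b) (x a) (η a)
    simp only [ContinuousLinearMap.inl_apply, Prod.mk_add_mk, add_zero, zero_add] at h
    exact h
  have e2 : ⟪gradient (fun z => φ (x a, z)) (x b), η b⟫
      = fderiv ℝ φ (x a, x b) ((0 : EuclideanSpace ℝ (Fin n)), η b) := by
    have h := aux1 φ hφd (ContinuousLinearMap.inr ℝ _ _)
      (x a, (0 : EuclideanSpace ℝ (Fin n))) (x b) (η b)
    simp only [ContinuousLinearMap.inr_apply, Prod.mk_add_mk, add_zero, zero_add] at h
    exact h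
  have eL : ∀ s : ℝ, (b - s) ^ (β - 1) / Real.Gamma β
      * (⟪gradient (fun z => L (z, u s, s)) (x s), η s⟫
          + ⟪gradient (fun z => L (x s, z, s)) (u s), ν s⟫)
      = (b - s) ^ (β - 1) / Real.Gamma β
        * fderiv ℝ L (x s, u s, s) (η s, ν s, (0:ℝ)) := by
    intro s
    have h1 := aux1 L hLd
      (ContinuousLinearMap.inl ℝ (EuclideanSpace ℝ (Fin n)) (EuclideanSpace ℝ (Fin n) × ℝ))
      ((0 : EuclideanSpace ℝ (Fin n)), u s, s) (x s) (η s)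
    simp only [ContinuousLinearMap.inl_apply, Prod.mk_add_mk, add_zero, zero_add] at h1
    have h2 := aux1 L hLd
      ((ContinuousLinearMap.inr ℝ (EuclideanSpace ℝ (Fin n)) (EuclideanSpace ℝ (Fin n) × ℝ)).comp
        (ContinuousLinearMap.inl ℝ (EuclideanSpace ℝ (Fin n)) ℝ))
      (x s, (0 : EuclideanSpace ℝ (Fin n)), s) (u s) (ν s)
    simp only [ContinuousLinearMap.comp_apply, ContinuousLinearMap.inr_apply,
      ContinuousLinearMap.inl_apply, Prod.mk_add_mk, add_zero, zero_add] at h2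
    rw [h1, h2, ← map_add]
    congr 2
    simp [Prod.mk_add_mk]
  have hBD : D = fderiv ℝ φ (x a, x b) (η a, η b)
      + ∫ s in a..b, (b - s) ^ (β - 1) / Real.Gamma β
          * fderiv ℝ L (x s, u s, s) (η s, ν s, (0:ℝ)) := by
    rw [hD, e1, e2]
    have h3 : (∫ s in a..b, (b - s) ^ (β - 1) / Real.Gamma β *
        (⟪gradient (fun z => L (z, u s, s)) (x s), η s⟫
          + ⟪gradient (fun z => L (x s, z, s)) (u s), ν s⟫))
        = ∫ s in a..b, (b - s) ^ (β - 1) / Real.Gamma β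
            * fderiv ℝ L (x s, u s, s) (η s, ν s, (0:ℝ)) :=
      intervalIntegral.integral_congr fun s _ => eL s
    rw [h3]
    have h4 : fderiv ℝ φ (x a, x b) (η a, (0 : EuclideanSpace ℝ (Fin n)))
        + fderiv ℝ φ (x a, x b) ((0 : EuclideanSpace ℝ (Fin n)), η b)
        = fderiv ℝ φ (x a, x b) (η a, η b) := by
      rw [← map_add]
      congr 1
      simp [Prod.mk_add_mk]
    rw [← h4]
  have hL0D : L' 0 = D := by rw [hL0eq, ← hBD]
  -- second-order identities
  have t1 : ⟪η a, (fderiv ℝ (fun z => gradient (fun z' => φ (z', x b)) z) (x a)) (η a)⟫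
      = fderiv ℝ (fderiv ℝ φ) (x a, x b)
          (η a, (0 : EuclideanSpace ℝ (Fin n))) (η a, (0 : EuclideanSpace ℝ (Fin n))) := by
    have hfun : (fun z => gradient (fun z' => φ (z', x b)) z)
        = fun z => (toDual ℝ (EuclideanSpace ℝ (Fin n))).symm
            ((fderiv ℝ φ (z, x b)).comp (ContinuousLinearMap.inl ℝ _ _)) := by
      funext z
      have h := aux_grad_eq φ hφd (ContinuousLinearMap.inl ℝ _ _)
        ((0 : EuclideanSpace ℝ (Fin n)), x b) z
      simp only [ContinuousLinearMap.inl_apply, Prod.mk_add_mk, add_zero, zero_add] at h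
      exact h
    have h2 := aux2 φ hφ (ContinuousLinearMap.inl ℝ _ _) (ContinuousLinearMap.inl ℝ _ _)
      ((0 : EuclideanSpace ℝ (Fin n)), x b) (x a) (η a) (η a)
    simp only [ContinuousLinearMap.inl_apply, Prod.mk_add_mk, add_zero, zero_add] at h2
    rw [hfun]
    exact h2
  have t2 : ⟪η a, (fderiv ℝ (fun z₂ => gradient (fun z₁ => φ (z₁, z₂)) (x a)) (x b)) (η b)⟫
      = fderiv ℝ (fderiv ℝ φ) (x a, x b)
          ((0 : EuclideanSpace ℝ (Fin n)), η b) (η a, (0 : EuclideanSpace ℝ (Fin n))) := by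
    have hfun : (fun z₂ => gradient (fun z₁ => φ (z₁, z₂)) (x a))
        = fun z₂ => (toDual ℝ (EuclideanSpace ℝ (Fin n))).symm
            ((fderiv ℝ φ (x a, z₂)).comp (ContinuousLinearMap.inl ℝ _ _)) := by
      funext z₂
      have h := aux_grad_eq φ hφd (ContinuousLinearMap.inl ℝ _ _)
        ((0 : EuclideanSpace ℝ (Fin n)), z₂) (x a)
      simp only [ContinuousLinearMap.inl_apply, Prod.mk_add_mk, add_zero, zero_add] at h
      exact h
    have h2 := aux2 φ hφ (ContinuousLinearMap.inl ℝ _ _) (ContinuousLinearMap.inr ℝ _ _)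
      (x a, (0 : EuclideanSpace ℝ (Fin n))) (x b) (η b) (η a)
    simp only [ContinuousLinearMap.inl_apply, ContinuousLinearMap.inr_apply,
      Prod.mk_add_mk, add_zero, zero_add] at h2
    rw [hfun]
    exact h2
  have t3 : ⟪η b, (fderiv ℝ (fun z => gradient (fun z' => φ (x a, z')) z) (x b)) (η b)⟫
      = fderiv ℝ (fderiv ℝ φ) (x a, x b)
          ((0 : EuclideanSpace ℝ (Fin n)), η b) ((0 : EuclideanSpace ℝ (Fin n)), η b) := by
    have hfun : (fun z => gradient (fun z' => φ (x a, z')) z)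
        = fun z => (toDual ℝ (EuclideanSpace ℝ (Fin n))).symm
            ((fderiv ℝ φ (x a, z)).comp (ContinuousLinearMap.inr ℝ _ _)) := by
      funext z
      have h := aux_grad_eq φ hφd (ContinuousLinearMap.inr ℝ _ _)
        (x a, (0 : EuclideanSpace ℝ (Fin n))) z
      simp only [ContinuousLinearMap.inr_apply, Prod.mk_add_mk, add_zero, zero_add] at h
      exact h
    have h2 := aux2 φ hφ (ContinuousLinearMap.inr ℝ _ _) (ContinuousLinearMap.inr ℝ _ _)
      (x a, (0 : EuclideanSpace ℝ (Fin n))) (x b) (η b) (η b)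
    simp only [ContinuousLinearMap.inr_apply, Prod.mk_add_mk, add_zero, zero_add] at h2
    rw [hfun]
    exact h2
  have hsymphi := (hφ.contDiffAt (x := ((x a, x b) :
    EuclideanSpace ℝ (Fin n) × EuclideanSpace ℝ (Fin n)))).isSymmSndFDerivAt (by simp)
  have hexpphi : fderiv ℝ (fderiv ℝ φ) (x a, x b) (η a, η b) (η a, η b)
      = fderiv ℝ (fderiv ℝ φ) (x a, x b)
          (η a, (0 : EuclideanSpace ℝ (Fin n))) (η a, (0 : EuclideanSpace ℝ (Fin n)))
        + 2 * fderiv ℝ (fderiv ℝ φ) (x a, x b)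
            ((0 : EuclideanSpace ℝ (Fin n)), η b) (η a, (0 : EuclideanSpace ℝ (Fin n)))
        + fderiv ℝ (fderiv ℝ φ) (x a, x b)
            ((0 : EuclideanSpace ℝ (Fin n)), η b) ((0 : EuclideanSpace ℝ (Fin n)), η b) := by
    have hsplit : ((η a, η b) : EuclideanSpace ℝ (Fin n) × EuclideanSpace ℝ (Fin n))
        = (η a, (0 : EuclideanSpace ℝ (Fin n))) + ((0 : EuclideanSpace ℝ (Fin n)), η b) := by
      simp [Prod.mk_add_mk]
    rw [hsplit]
    simp only [map_add, ContinuousLinearMap.add_apply]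
    have h9 := hsymphi (η a, (0 : EuclideanSpace ℝ (Fin n))) ((0 : EuclideanSpace ℝ (Fin n)), η b)
    linarith [h9]
  have hsymL : ∀ s : ℝ, ∀ v w₂ : EuclideanSpace ℝ (Fin n) × EuclideanSpace ℝ (Fin n) × ℝ,
      fderiv ℝ (fderiv ℝ L) (x s, u s, s) v w₂ = fderiv ℝ (fderiv ℝ L) (x s, u s, s) w₂ v :=
    fun s => (hL.contDiffAt (x := ((x s, u s, s) :
      EuclideanSpace ℝ (Fin n) × EuclideanSpace ℝ (Fin n) × ℝ))).isSymmSndFDerivAt (by simp)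
  have tL1 : ∀ s : ℝ,
      ⟪η s, (fderiv ℝ (fun z => gradient (fun z' => L (z', u s, s)) z) (x s)) (η s)⟫
      = fderiv ℝ (fderiv ℝ L) (x s, u s, s)
          ((η s, (0 : EuclideanSpace ℝ (Fin n)), (0:ℝ)))
          ((η s, (0 : EuclideanSpace ℝ (Fin n)), (0:ℝ))) := by
    intro s
    have hfun : (fun z => gradient (fun z' => L (z', u s, s)) z)
        = fun z => (toDual ℝ (EuclideanSpace ℝ (Fin n))).symm
            ((fderiv ℝ L (z, u s, s)).comp
              (ContinuousLinearMap.inl ℝ (EuclideanSpace ℝ (Fin n))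
                (EuclideanSpace ℝ (Fin n) × ℝ))) := by
      funext z
      have h := aux_grad_eq L hLd
        (ContinuousLinearMap.inl ℝ (EuclideanSpace ℝ (Fin n)) (EuclideanSpace ℝ (Fin n) × ℝ))
        ((0 : EuclideanSpace ℝ (Fin n)), u s, s) z
      simp only [ContinuousLinearMap.inl_apply, Prod.mk_add_mk, add_zero, zero_add] at h
      exact h
    have h2 := aux2 L hL
      (ContinuousLinearMap.inl ℝ (EuclideanSpace ℝ (Fin n)) (EuclideanSpace ℝ (Fin n) × ℝ))
      (ContinuousLinearMap.inl ℝ (EuclideanSpace ℝ (Fin n)) (EuclideanSpace ℝ (Fin n) × ℝ))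
      ((0 : EuclideanSpace ℝ (Fin n)), u s, s) (x s) (η s) (η s)
    simp only [ContinuousLinearMap.inl_apply, Prod.mk_add_mk, add_zero, zero_add] at h2
    rw [hfun]
    exact h2
  have tL2 : ∀ s : ℝ,
      ⟪η s, (fderiv ℝ (fun z₂ => gradient (fun z₁ => L (z₁, z₂, s)) (x s)) (u s)) (ν s)⟫
      = fderiv ℝ (fderiv ℝ L) (x s, u s, s)
          (((0 : EuclideanSpace ℝ (Fin n)), ν s, (0:ℝ)))
          ((η s, (0 : EuclideanSpace ℝ (Fin n)), (0:ℝ))) := by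
    intro s
    have hfun : (fun z₂ => gradient (fun z₁ => L (z₁, z₂, s)) (x s))
        = fun z₂ => (toDual ℝ (EuclideanSpace ℝ (Fin n))).symm
            ((fderiv ℝ L (x s, z₂, s)).comp
              (ContinuousLinearMap.inl ℝ (EuclideanSpace ℝ (Fin n))
                (EuclideanSpace ℝ (Fin n) × ℝ))) := by
      funext z₂
      have h := aux_grad_eq L hLd
        (ContinuousLinearMap.inl ℝ (EuclideanSpace ℝ (Fin n)) (EuclideanSpace ℝ (Fin n) × ℝ))
        ((0 : EuclideanSpace ℝ (Fin n)), z₂, s) (x s)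
      simp only [ContinuousLinearMap.inl_apply, Prod.mk_add_mk, add_zero, zero_add] at h
      exact h
    have h2 := aux2 L hL
      (ContinuousLinearMap.inl ℝ (EuclideanSpace ℝ (Fin n)) (EuclideanSpace ℝ (Fin n) × ℝ))
      ((ContinuousLinearMap.inr ℝ (EuclideanSpace ℝ (Fin n)) (EuclideanSpace ℝ (Fin n) × ℝ)).comp
        (ContinuousLinearMap.inl ℝ (EuclideanSpace ℝ (Fin n)) ℝ))
      (x s, (0 : EuclideanSpace ℝ (Fin n)), s) (u s) (ν s) (η s)
    simp only [ContinuousLinearMap.comp_apply, ContinuousLinearMap.inr_apply,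
      ContinuousLinearMap.inl_apply, Prod.mk_add_mk, add_zero, zero_add] at h2
    rw [hfun]
    exact h2
  have tL3 : ∀ s : ℝ,
      ⟪ν s, (fderiv ℝ (fun z => gradient (fun z' => L (x s, z', s)) z) (u s)) (ν s)⟫
      = fderiv ℝ (fderiv ℝ L) (x s, u s, s)
          (((0 : EuclideanSpace ℝ (Fin n)), ν s, (0:ℝ)))
          (((0 : EuclideanSpace ℝ (Fin n)), ν s, (0:ℝ))) := by
    intro s
    have hfun : (fun z => gradient (fun z' => L (x s, z', s)) z)
        = fun z => (toDual ℝ (EuclideanSpace ℝ (Fin n))).symm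
            ((fderiv ℝ L (x s, z, s)).comp
              ((ContinuousLinearMap.inr ℝ (EuclideanSpace ℝ (Fin n))
                (EuclideanSpace ℝ (Fin n) × ℝ)).comp
                (ContinuousLinearMap.inl ℝ (EuclideanSpace ℝ (Fin n)) ℝ))) := by
      funext z
      have h := aux_grad_eq L hLd
        ((ContinuousLinearMap.inr ℝ (EuclideanSpace ℝ (Fin n))
          (EuclideanSpace ℝ (Fin n) × ℝ)).comp
          (ContinuousLinearMap.inl ℝ (EuclideanSpace ℝ (Fin n)) ℝ))
        (x s, (0 : EuclideanSpace ℝ (Fin n)), s) z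
      simp only [ContinuousLinearMap.comp_apply, ContinuousLinearMap.inr_apply,
        ContinuousLinearMap.inl_apply, Prod.mk_add_mk, add_zero, zero_add] at h
      exact h
    have h2 := aux2 L hL
      ((ContinuousLinearMap.inr ℝ (EuclideanSpace ℝ (Fin n)) (EuclideanSpace ℝ (Fin n) × ℝ)).comp
        (ContinuousLinearMap.inl ℝ (EuclideanSpace ℝ (Fin n)) ℝ))
      ((ContinuousLinearMap.inr ℝ (EuclideanSpace ℝ (Fin n)) (EuclideanSpace ℝ (Fin n) × ℝ)).comp
        (ContinuousLinearMap.inl ℝ (EuclideanSpace ℝ (Fin n)) ℝ))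
      (x s, (0 : EuclideanSpace ℝ (Fin n)), s) (u s) (ν s) (ν s)
    simp only [ContinuousLinearMap.comp_apply, ContinuousLinearMap.inr_apply,
      ContinuousLinearMap.inl_apply, Prod.mk_add_mk, add_zero, zero_add] at h2
    rw [hfun]
    exact h2
  have hexpL : ∀ s : ℝ, fderiv ℝ (fderiv ℝ L) (x s, u s, s)
        (η s, ν s, (0:ℝ)) (η s, ν s, (0:ℝ))
      = fderiv ℝ (fderiv ℝ L) (x s, u s, s)
          ((η s, (0 : EuclideanSpace ℝ (Fin n)), (0:ℝ)))
          ((η s, (0 : EuclideanSpace ℝ (Fin n)), (0:ℝ)))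
        + 2 * fderiv ℝ (fderiv ℝ L) (x s, u s, s)
            (((0 : EuclideanSpace ℝ (Fin n)), ν s, (0:ℝ)))
            ((η s, (0 : EuclideanSpace ℝ (Fin n)), (0:ℝ)))
        + fderiv ℝ (fderiv ℝ L) (x s, u s, s)
            (((0 : EuclideanSpace ℝ (Fin n)), ν s, (0:ℝ)))
            (((0 : EuclideanSpace ℝ (Fin n)), ν s, (0:ℝ))) := by
    intro s
    have hsplit : ((η s, ν s, (0:ℝ)) :
        EuclideanSpace ℝ (Fin n) × EuclideanSpace ℝ (Fin n) × ℝ)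
        = (η s, (0 : EuclideanSpace ℝ (Fin n)), (0:ℝ))
          + ((0 : EuclideanSpace ℝ (Fin n)), ν s, (0:ℝ)) := by
      simp [Prod.mk_add_mk]
    rw [hsplit]
    simp only [map_add, ContinuousLinearMap.add_apply]
    have h9 := hsymL s ((η s, (0 : EuclideanSpace ℝ (Fin n)), (0:ℝ)))
      (((0 : EuclideanSpace ℝ (Fin n)), ν s, (0:ℝ)))
    linarith [h9]
  -- rewrite the target
  have hTbig : (⟪η a, (fderiv ℝ (fun z => gradient (fun z' => φ (z', x b)) z) (x a)) (η a)⟫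
        + 2 * ⟪η a, (fderiv ℝ (fun z₂ => gradient (fun z₁ => φ (z₁, z₂)) (x a)) (x b)) (η b)⟫
        + ⟪η b, (fderiv ℝ (fun z => gradient (fun z' => φ (x a, z')) z) (x b)) (η b)⟫
        + ∫ s in a..b, ((b - s) ^ (β - 1) / Real.Gamma β) *
            (⟪η s, (fderiv ℝ (fun z => gradient (fun z' => L (z', u s, s)) z) (x s)) (η s)⟫
              + 2 * ⟪η s, (fderiv ℝ (fun z₂ => gradient (fun z₁ => L (z₁, z₂, s)) (x s)) (u s)) (ν s)⟫
              + ⟪ν s, (fderiv ℝ (fun z => gradient (fun z' => L (x s, z', s)) z) (u s)) (ν s)⟫))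
      = fderiv ℝ (fderiv ℝ φ) (x a, x b) (η a, η b) (η a, η b)
        + ∫ s in a..b, (b - s) ^ (β - 1) / Real.Gamma β
            * fderiv ℝ (fderiv ℝ L) (x s, u s, s) (η s, ν s, (0:ℝ)) (η s, ν s, (0:ℝ)) := by
    rw [t1, t2, t3, hexpphi]
    congr 1
    refine intervalIntegral.integral_congr fun s _ => ?_
    rw [tL1 s, tL2 s, tL3 s, hexpL s]
  rw [hTbig]
  -- conclude with L'Hôpital
  have hball : ball (0:ℝ) 1 ∈ 𝓝[≠] (0:ℝ) :=
    mem_nhdsWithin_of_mem_nhds (ball_mem_nhds (0:ℝ) one_pos)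
  refine HasDerivAt.lhopital_zero_nhdsNE (f' := fun t : ℝ => L' t - D) (g' := fun t : ℝ => t)
    ?_ ?_ ?_ ?_ ?_ ?_
  · filter_upwards [hball] with t ht
    exact ((h𝓛' t ht).sub_const (𝓛 0)).sub (hasDerivAt_mul_const D)
  · refine Eventually.of_forall fun t => ?_
    have h := (hasDerivAt_pow 2 t).div_const 2
    exact h.congr_deriv (by norm_num)
  · filter_upwards [self_mem_nhdsWithin] with t ht
    exact ht
  · have hc : ContinuousAt 𝓛 0 := (h𝓛' 0 (mem_ball_self one_pos)).continuousAt
    have h5 : ContinuousAt (fun h : ℝ => 𝓛 h - 𝓛 0 - h * D) 0 :=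
      (hc.sub continuousAt_const).sub (continuousAt_id.mul continuousAt_const)
    have h6 := h5.tendsto
    simp only [sub_self, zero_mul, sub_zero] at h6
    exact h6.mono_left nhdsWithin_le_nhds
  · have h5 : ContinuousAt (fun h : ℝ => h ^ 2 / 2) 0 :=
      ((continuous_pow 2).div_const 2).continuousAt
    have h6 := h5.tendsto
    norm_num at h6
    exact h6.mono_left nhdsWithin_le_nhds
  · have h8 := hLd2
    rw [hasDerivAt_iff_tendsto_slope] at h8
    refine h8.congr' ?_
    filter_upwards [self_mem_nhdsWithin] with t ht
    rw [slope_def_field, hL0D, sub_zero]
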